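/- Let $A=\bigoplus_{i\ge0}A_i$ be a graded algebra and $\mathsf{X}$ a graded left $A$-module. For $r\ge 0$ define $\mathsf{I}^r(\mathsf{X}) = \bigoplus_i\mathrm{Hom}_{A_0}((K_A)_r\otimes_{A_0}A_i, \mathsf{X})$, and maps $d_r(f) = f\circ(\mathrm{id}_{A_1}^{\otimes r}\otimes m_{A_1,A})$ and $\rho_r(f) = \lambda_{\mathsf{X}}\circ(\mathrm{id}_{A_1}\otimes f)$, where $\lambda_{\mathsf{X}}$ is the action map. Then $\rho_{r+1}\circ\rho_r = 0$ and $\rho_{r+1}\circ d_r = d_{r+1}\circ\rho_r$; consequently $\partial_r := d_r + (-1)^r\rho_r$ satisfies $\partial_{r+1}\circ\partial_r = 0$, making $(\mathsf{I}^\bullet(\mathsf{X}),\partial)$ a complex. -/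

import Mathlib

open TensorProduct

universe u

/-- A bundled `k`-module (used to build iterated tensor powers by recursion). -/
structure BMod (k : Type u) [Field k] where
  carrier : Type u
  [acg : AddCommGroup carrier]
  [mod : Module k carrier]

attribute [instance] BMod.acg BMod.mod

noncomputable section

variable (k A : Type u) [Field k] [Ring A] [Algebra k A] (𝒜 : ℕ → Submodule k A)

/-- Iterated tensor powers `T^i_k(A₁)` of `A₁ = 𝒜 1` (the `k`-linear model for
`T^i_{A₀}(A₁)`). -/
def TP (n : ℕ) : BMod k :=
  Nat.rec ⟨k⟩ (fun _ ih => ⟨↥(𝒜 1) ⊗[k] ih.carrier⟩) n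

/-- The carrier of `T^i(A₁)`. -/
abbrev U (n : ℕ) : Type u := (TP k A 𝒜 n).carrier

/-- Multiplication `A₁ ⊗ A → A`. -/
def mulA1A : (↥(𝒜 1) ⊗[k] A) →ₗ[k] A :=
  LinearMap.mul' k A ∘ₗ TensorProduct.map (𝒜 1).subtype LinearMap.id

/-- `id^{⊗ r} ⊗ m_{A₁,A} : T^{r+1}(A₁) ⊗ A → T^r(A₁) ⊗ A` (multiplication of the last
tensor factor into `A`). -/
def mJoin : ∀ i : ℕ, (U k A 𝒜 (i + 1) ⊗[k] A) →ₗ[k] (U k A 𝒜 i ⊗[k] A)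
  | 0 =>
      (TensorProduct.lid k A).symm.toLinearMap ∘ₗ mulA1A k A 𝒜 ∘ₗ
        LinearMap.rTensor A (TensorProduct.rid k ↥(𝒜 1)).toLinearMap
  | i + 1 =>
      (TensorProduct.assoc k ↥(𝒜 1) (U k A 𝒜 i) A).symm.toLinearMap ∘ₗ
        LinearMap.lTensor ↥(𝒜 1) (mJoin i) ∘ₗ
          (TensorProduct.assoc k ↥(𝒜 1) (U k A 𝒜 (i + 1)) A).toLinearMap

/-- `ker (m|_{A₁ ⊗ A₁})`. -/
def S2 : Submodule k (↥(𝒜 1) ⊗[k] ↥(𝒜 1)) :=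
  LinearMap.ker (LinearMap.mul' k A ∘ₗ TensorProduct.map (𝒜 1).subtype (𝒜 1).subtype)

/-- The submodule `T^r(A₁) ⊗ ker(m|_{A₁⊗A₁})` of `T^{r+2}(A₁)` (kernel condition at
the *last* junction). -/
def lastJ : ∀ r : ℕ, Submodule k (U k A 𝒜 (r + 2))
  | 0 =>
      Submodule.map
        (TensorProduct.congr (LinearEquiv.refl k ↥(𝒜 1))
          (TensorProduct.rid k ↥(𝒜 1)).symm).toLinearMap (S2 k A 𝒜)
  | r + 1 =>
      Submodule.map₂ (TensorProduct.mk k ↥(𝒜 1) (U k A 𝒜 (r + 2))) ⊤ (lastJ r)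

variable (X : Type u) [AddCommGroup X] [Module k X] [Module A X] [IsScalarTower k A X]

/-- The `A`-action on `X` as a `k`-bilinear map. -/
def actAX : A →ₗ[k] X →ₗ[k] X where
  toFun a :=
    { toFun := fun x => a • x
      map_add' := smul_add a
      map_smul' := fun c x => by
        simp only [RingHom.id_apply]
        rw [algebra_compatible_smul A c x, algebra_compatible_smul A c (a • x),
          ← mul_smul, ← mul_smul, Algebra.commutes] }
  map_add' a b := by ext x; simp [add_smul]
  map_smul' c a := by ext x; simp [mul_smul, algebra_compatible_smul A c x]

/-- The action `A₁ ⊗ X → X`. -/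
def actA1X : (↥(𝒜 1) ⊗[k] X) →ₗ[k] X :=
  TensorProduct.lift (actAX k A X ∘ₗ (𝒜 1).subtype)

variable (K : ∀ r : ℕ, Submodule k (U k A 𝒜 r))

/-- `(K_A)_r ⊗ A`, the `r`-th Koszul part of `T^r(A₁) ⊗ A`. -/
def KAU (r : ℕ) : Submodule k (U k A 𝒜 r ⊗[k] A) :=
  Submodule.map₂ (TensorProduct.mk k (U k A 𝒜 r) A) (K r) ⊤

/-- `d_r (f) = f ∘ (id^{⊗ r} ⊗ m_{A₁,A})`. -/
def dOp (r : ℕ) (f : (U k A 𝒜 r ⊗[k] A) →ₗ[k] X) :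
    (U k A 𝒜 (r + 1) ⊗[k] A) →ₗ[k] X :=
  f ∘ₗ mJoin k A 𝒜 r

/-- `ρ_r (f) = λ_X ∘ (id_{A₁} ⊗ f)`. -/
def rhoOp (r : ℕ) (f : (U k A 𝒜 r ⊗[k] A) →ₗ[k] X) :
    (U k A 𝒜 (r + 1) ⊗[k] A) →ₗ[k] X :=
  actA1X k A 𝒜 X ∘ₗ LinearMap.lTensor ↥(𝒜 1) f ∘ₗ
    (TensorProduct.assoc k ↥(𝒜 1) (U k A 𝒜 r) A).toLinearMap

/-- `∂_r = d_r + (-1)^r ρ_r`. -/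
def parOp (r : ℕ) (f : (U k A 𝒜 r ⊗[k] A) →ₗ[k] X) :
    (U k A 𝒜 (r + 1) ⊗[k] A) →ₗ[k] X :=
  dOp k A 𝒜 X r f + ((-1 : k) ^ r) • rhoOp k A 𝒜 X r f

end
set_option synthInstance.maxHeartbeats 400000
set_option maxHeartbeats 1000000

noncomputable section Aux
variable {k A : Type u} [Field k] [Ring A] [Algebra k A] {𝒜 : ℕ → Submodule k A}
variable {X : Type u} [AddCommGroup X] [Module k X] [Module A X] [IsScalarTower k A X]

lemma rhoOp_tmul (r : ℕ) (f : (U k A 𝒜 r ⊗[k] A) →ₗ[k] X) (x : ↥(𝒜 1))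
    (v : U k A 𝒜 r) (a : A) :
    rhoOp k A 𝒜 X r f ((x ⊗ₜ v) ⊗ₜ a) = (x : A) • f (v ⊗ₜ a) := rfl

lemma mJoin_succ_tmul (i : ℕ) (x : ↥(𝒜 1)) (v : U k A 𝒜 (i + 1)) (a : A) :
    mJoin k A 𝒜 (i + 1) ((x ⊗ₜ v) ⊗ₜ a) =
      (TensorProduct.assoc k ↥(𝒜 1) (U k A 𝒜 i) A).symm
        (x ⊗ₜ mJoin k A 𝒜 i (v ⊗ₜ a)) := rfl

lemma rhoOp_symm_assoc (r : ℕ) (f : (U k A 𝒜 r ⊗[k] A) →ₗ[k] X) (x : ↥(𝒜 1))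
    (z : U k A 𝒜 r ⊗[k] A) :
    rhoOp k A 𝒜 X r f
      ((TensorProduct.assoc k ↥(𝒜 1) (U k A 𝒜 r) A).symm (x ⊗ₜ z)) =
      (x : A) • f z := by
  induction z using TensorProduct.induction_on with
  | zero => simp; exact map_zero _
  | tmul w b => exact rhoOp_tmul r f x w b
  | add z1 z2 ih1 ih2 => simp [tmul_add, ih1, ih2, smul_add]; rw [← ih1, ← ih2]; exact map_add _ _ _

lemma mJoin_succ_symm_assoc (i : ℕ) (x : ↥(𝒜 1)) (z : U k A 𝒜 (i + 1) ⊗[k] A) :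
    mJoin k A 𝒜 (i + 1)
      ((TensorProduct.assoc k ↥(𝒜 1) (U k A 𝒜 (i + 1)) A).symm (x ⊗ₜ z)) =
      (TensorProduct.assoc k ↥(𝒜 1) (U k A 𝒜 i) A).symm
        (x ⊗ₜ mJoin k A 𝒜 i z) := by
  induction z using TensorProduct.induction_on with
  | zero => simp; exact map_zero _
  | tmul w b => exact mJoin_succ_tmul i x w b
  | add z1 z2 ih1 ih2 => simp [tmul_add, ih1, ih2]; rw [← ih1, ← ih2]; exact map_add _ _ _
lemma rho_rho_S2 (r : ℕ) (f : (U k A 𝒜 r ⊗[k] A) →ₗ[k] X) (t : U k A 𝒜 r) (a : A)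
    (s : ↥(𝒜 1) ⊗[k] ↥(𝒜 1)) :
    rhoOp k A 𝒜 X (r + 1) (rhoOp k A 𝒜 X r f)
      (((TensorProduct.assoc k ↥(𝒜 1) ↥(𝒜 1) (U k A 𝒜 r)) (s ⊗ₜ t)) ⊗ₜ a) =
      (LinearMap.mul' k A (TensorProduct.map (𝒜 1).subtype (𝒜 1).subtype s)) •
        f (t ⊗ₜ a) := by
  induction s using TensorProduct.induction_on with
  | zero => simp; erw [zero_tmul, map_zero]
  | tmul x y =>
      have h1 : rhoOp k A 𝒜 X (r + 1) (rhoOp k A 𝒜 X r f)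
          (((TensorProduct.assoc k ↥(𝒜 1) ↥(𝒜 1) (U k A 𝒜 r)) ((x ⊗ₜ y) ⊗ₜ t)) ⊗ₜ a) =
          (x : A) • ((y : A) • f (t ⊗ₜ a)) := rfl
      have h2 : (LinearMap.mul' k A
          (TensorProduct.map (𝒜 1).subtype (𝒜 1).subtype (x ⊗ₜ y))) = (x : A) * (y : A) := rfl
      rw [h1, h2, mul_smul]
  | add s1 s2 ih1 ih2 =>
      rw [add_tmul, map_add]; erw [add_tmul, map_add]; rw [ih1, ih2, map_add, map_add, add_smul]

lemma dd_zero (s : ↥(𝒜 1) ⊗[k] ↥(𝒜 1)) (a : A) :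
    mJoin k A 𝒜 0 (mJoin k A 𝒜 1
      (((TensorProduct.congr (LinearEquiv.refl k ↥(𝒜 1))
          (TensorProduct.rid k ↥(𝒜 1)).symm) s) ⊗ₜ a)) =
      (1 : k) ⊗ₜ ((LinearMap.mul' k A
        (TensorProduct.map (𝒜 1).subtype (𝒜 1).subtype s)) * a) := by
  induction s using TensorProduct.induction_on with
  | zero => simp; erw [zero_tmul, map_zero]; exact (tmul_zero ..).symm
  | tmul x y =>
      have h1 : (TensorProduct.congr (LinearEquiv.refl k ↥(𝒜 1))
          (TensorProduct.rid k ↥(𝒜 1)).symm) (x ⊗ₜ y) =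
          x ⊗ₜ (y ⊗ₜ (1 : k)) := rfl
      rw [h1]
      have h2 : mJoin k A 𝒜 0 (mJoin k A 𝒜 1 ((x ⊗ₜ (y ⊗ₜ (1 : k))) ⊗ₜ a)) =
          (1 : k) ⊗ₜ ((((1:k) • (x : A))) * ((((1:k) • (y : A))) * a)) := rfl
      rw [h2]
      have h3 : (LinearMap.mul' k A
          (TensorProduct.map (𝒜 1).subtype (𝒜 1).subtype (x ⊗ₜ y))) = (x : A) * (y : A) := rfl
      rw [h3, one_smul, one_smul, mul_assoc]
  | add s1 s2 ih1 ih2 =>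
      rw [map_add]; erw [add_tmul, map_add, map_add]; rw [ih1, ih2]
      simp [add_mul, tmul_add]; exact (tmul_add ..).symm
lemma dd_lastJ : ∀ (r : ℕ), ∀ u ∈ lastJ k A 𝒜 r, ∀ a : A,
    mJoin k A 𝒜 r (mJoin k A 𝒜 (r + 1) (u ⊗ₜ a)) = 0 := by
  intro r
  induction r with
  | zero =>
      intro u hu a
      rw [lastJ] at hu
      obtain ⟨s, hs, rfl⟩ := hu
      have hdz := dd_zero (k := k) (A := A) (𝒜 := 𝒜) s a
      have hs0 : LinearMap.mul' k A
          (TensorProduct.map (𝒜 1).subtype (𝒜 1).subtype s) = 0 := hs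
      rw [hs0, zero_mul] at hdz; erw [tmul_zero] at hdz
      exact hdz
  | succ r ih =>
      intro u hu a
      have hle : lastJ k A 𝒜 (r + 1) ≤
          LinearMap.ker ((mJoin k A 𝒜 (r + 1) ∘ₗ mJoin k A 𝒜 (r + 2)) ∘ₗ
            (TensorProduct.mk k (U k A 𝒜 (r + 3)) A).flip a) := by
        rw [lastJ]
        refine Submodule.map₂_le.mpr ?_
        intro x _ v hv
        simp only [LinearMap.mem_ker, LinearMap.comp_apply, LinearMap.flip_apply]
        exact (by rw [mJoin_succ_tmul (r + 1) x v a, mJoin_succ_symm_assoc r x,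
            ih v hv a, tmul_zero, map_zero]; rfl :
          mJoin k A 𝒜 (r + 1) (mJoin k A 𝒜 (r + 2) ((x ⊗ₜ v) ⊗ₜ a)) = 0)
      exact hle hu
lemma dOp_add (r : ℕ) (g h : (U k A 𝒜 r ⊗[k] A) →ₗ[k] X) :
    dOp k A 𝒜 X r (g + h) = dOp k A 𝒜 X r g + dOp k A 𝒜 X r h :=
  LinearMap.add_comp _ _ _

lemma dOp_smul (r : ℕ) (c : k) (g : (U k A 𝒜 r ⊗[k] A) →ₗ[k] X) :
    dOp k A 𝒜 X r (c • g) = c • dOp k A 𝒜 X r g :=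
  LinearMap.smul_comp _ _ _

lemma rhoOp_add (r : ℕ) (g h : (U k A 𝒜 r ⊗[k] A) →ₗ[k] X) :
    rhoOp k A 𝒜 X r (g + h) = rhoOp k A 𝒜 X r g + rhoOp k A 𝒜 X r h := by
  simp only [rhoOp, LinearMap.lTensor_add, LinearMap.add_comp, LinearMap.comp_add]; erw [LinearMap.add_comp, LinearMap.comp_add]

lemma rhoOp_smul (r : ℕ) (c : k) (g : (U k A 𝒜 r ⊗[k] A) →ₗ[k] X) :
    rhoOp k A 𝒜 X r (c • g) = c • rhoOp k A 𝒜 X r g := by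
  simp only [rhoOp, LinearMap.lTensor_smul, LinearMap.smul_comp, LinearMap.comp_smul]; erw [LinearMap.smul_comp, LinearMap.comp_smul]

lemma rho_d_comm (r : ℕ) (f : (U k A 𝒜 r ⊗[k] A) →ₗ[k] X) :
    rhoOp k A 𝒜 X (r + 1) (dOp k A 𝒜 X r f) =
      dOp k A 𝒜 X (r + 1) (rhoOp k A 𝒜 X r f) := by
  apply LinearMap.ext; intro z
  induction z using TensorProduct.induction_on with
  | zero => simp
  | tmul w a =>
      refine TensorProduct.induction_on w ?_ ?_ ?_
      · erw [zero_tmul, map_zero]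
      · intro x v
        exact (rhoOp_symm_assoc r f x (mJoin k A 𝒜 r (v ⊗ₜ a))).symm
      · intro w1 w2 h1 h2
        erw [add_tmul, map_add, map_add, h1, h2]
  | add z1 z2 ih1 ih2 => rw [map_add, map_add, ih1, ih2]
end Aux

/-- Let `A` be a graded algebra (grading `𝒜`, `A₁ = 𝒜 1`),
`𝖷` a (graded) left `A`-module, `K r` the Koszul subspaces of `T^r(A₁)` (given
together with the standard inclusions `K_{r+1} ⊆ A₁ ⊗ K_r`,
`K_{r+2} ⊆ ker(m|_{A₁⊗A₁}) ⊗ T^r` and `K_{r+2} ⊆ T^r ⊗ ker(m|_{A₁⊗A₁})`).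
For `f ∈ 𝖨^r(𝖷) = Hom((K_A)_r ⊗ A, 𝖷)` put `d_r f = f ∘ (id^{⊗r} ⊗ m_{A₁,A})` and
`ρ_r f = λ_𝖷 ∘ (id_{A₁} ⊗ f)`.  Then `ρ_{r+1} ∘ ρ_r = 0` and
`ρ_{r+1} ∘ d_r = d_{r+1} ∘ ρ_r`; consequently `∂_r = d_r + (-1)^r ρ_r` satisfies
`∂_{r+1} ∘ ∂_r = 0` (on the Koszul part), so `(𝖨^•(𝖷), ∂)` is a complex. -/
theorem I_complex_differential
    (k A : Type u) [Field k] [Ring A] [Algebra k A] (𝒜 : ℕ → Submodule k A)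
    (X : Type u) [AddCommGroup X] [Module k X] [Module A X] [IsScalarTower k A X]
    (K : ∀ r : ℕ, Submodule k (U k A 𝒜 r))
    (hK1 : ∀ r : ℕ,
      K (r + 1) ≤ Submodule.map₂ (TensorProduct.mk k ↥(𝒜 1) (U k A 𝒜 r)) ⊤ (K r))
    (hK2 : ∀ r : ℕ,
      K (r + 2) ≤
        Submodule.map (TensorProduct.assoc k ↥(𝒜 1) ↥(𝒜 1) (U k A 𝒜 r)).toLinearMap
          (Submodule.map₂ (TensorProduct.mk k (↥(𝒜 1) ⊗[k] ↥(𝒜 1)) (U k A 𝒜 r))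
            (S2 k A 𝒜) ⊤))
    (hKlast : ∀ r : ℕ, K (r + 2) ≤ lastJ k A 𝒜 r) :
    -- `ρ ∘ ρ = 0` on the Koszul part
    (∀ (r : ℕ) (f : (U k A 𝒜 r ⊗[k] A) →ₗ[k] X),
      ∀ z ∈ KAU k A 𝒜 K (r + 2),
        rhoOp k A 𝒜 X (r + 1) (rhoOp k A 𝒜 X r f) z = 0) ∧
    -- `ρ ∘ d = d ∘ ρ`
    (∀ (r : ℕ) (f : (U k A 𝒜 r ⊗[k] A) →ₗ[k] X),
      rhoOp k A 𝒜 X (r + 1) (dOp k A 𝒜 X r f) =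
        dOp k A 𝒜 X (r + 1) (rhoOp k A 𝒜 X r f)) ∧
    -- consequently `∂ ∘ ∂ = 0` on the Koszul part
    (∀ (r : ℕ) (f : (U k A 𝒜 r ⊗[k] A) →ₗ[k] X),
      ∀ z ∈ KAU k A 𝒜 K (r + 2),
        parOp k A 𝒜 X (r + 1) (parOp k A 𝒜 X r f) z = 0) := by
  have hrr : ∀ (r : ℕ) (f : (U k A 𝒜 r ⊗[k] A) →ₗ[k] X),
      KAU k A 𝒜 K (r + 2) ≤
        LinearMap.ker (rhoOp k A 𝒜 X (r + 1) (rhoOp k A 𝒜 X r f)) := by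
    intro r f
    rw [KAU]
    refine Submodule.map₂_le.mpr ?_
    intro u hu a _
    obtain ⟨w, hw, rfl⟩ := hK2 r hu
    have hle : Submodule.map₂ (TensorProduct.mk k (↥(𝒜 1) ⊗[k] ↥(𝒜 1)) (U k A 𝒜 r))
        (S2 k A 𝒜) ⊤ ≤
        LinearMap.ker ((rhoOp k A 𝒜 X (r + 1) (rhoOp k A 𝒜 X r f) ∘ₗ
          (TensorProduct.mk k (U k A 𝒜 (r + 2)) A).flip a) ∘ₗ
          (TensorProduct.assoc k ↥(𝒜 1) ↥(𝒜 1) (U k A 𝒜 r)).toLinearMap) := by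
      refine Submodule.map₂_le.mpr ?_
      intro s hs t _
      refine LinearMap.mem_ker.mpr ?_
      have hs0 : LinearMap.mul' k A
          (TensorProduct.map (𝒜 1).subtype (𝒜 1).subtype s) = 0 := hs
      exact (by rw [rho_rho_S2 r f t a s, hs0, zero_smul] :
        rhoOp k A 𝒜 X (r + 1) (rhoOp k A 𝒜 X r f)
          (((TensorProduct.assoc k ↥(𝒜 1) ↥(𝒜 1) (U k A 𝒜 r)) (s ⊗ₜ t)) ⊗ₜ a) = 0)
    refine LinearMap.mem_ker.mpr ?_
    exact LinearMap.mem_ker.mp (hle hw)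
  have hdd : ∀ (r : ℕ) (f : (U k A 𝒜 r ⊗[k] A) →ₗ[k] X),
      KAU k A 𝒜 K (r + 2) ≤
        LinearMap.ker (dOp k A 𝒜 X (r + 1) (dOp k A 𝒜 X r f)) := by
    intro r f
    rw [KAU]
    refine Submodule.map₂_le.mpr ?_
    intro u hu a _
    refine LinearMap.mem_ker.mpr ?_
    have h0 := dd_lastJ r u (hKlast r hu) a
    calc dOp k A 𝒜 X (r + 1) (dOp k A 𝒜 X r f)
          ((TensorProduct.mk k (U k A 𝒜 (r + 2)) A) u a)
        = f (mJoin k A 𝒜 r (mJoin k A 𝒜 (r + 1) (u ⊗ₜ a))) := rfl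
      _ = 0 := by rw [h0, map_zero]
  refine ⟨fun r f z hz => LinearMap.mem_ker.mp (hrr r f hz),
    fun r f => rho_d_comm r f, ?_⟩
  intro r f z hz
  have e1 : dOp k A 𝒜 X (r + 1) (dOp k A 𝒜 X r f) z = 0 :=
    LinearMap.mem_ker.mp (hdd r f hz)
  have e2 : rhoOp k A 𝒜 X (r + 1) (rhoOp k A 𝒜 X r f) z = 0 :=
    LinearMap.mem_ker.mp (hrr r f hz)
  have e3 : rhoOp k A 𝒜 X (r + 1) (dOp k A 𝒜 X r f) z =
      dOp k A 𝒜 X (r + 1) (rhoOp k A 𝒜 X r f) z := by rw [rho_d_comm r f]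
  have hpow : ((-1 : k) ^ (r + 1)) = -((-1 : k) ^ r) := by rw [pow_succ]; ring
  simp only [parOp, dOp_add, dOp_smul, rhoOp_add, rhoOp_smul, LinearMap.add_apply,
    LinearMap.smul_apply, e1, e2, e3, smul_zero, add_zero, zero_add]
  rw [hpow, neg_smul, add_neg_cancel]
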